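/- For the Kindlmann aphid model, the quantity E(t) = a·x(t) − r·h(t) + h(t)²/2 is conserved along solutions; that is, E(t) = a·x₀ for all t. -/

import Mathlib

theorem kindlmann_conserved
    (a r x0 T : ℝ) (ha : 0 < a) (hr : 0 < r) (hx0 : 0 < x0) (hT : 0 ≤ T)
    (h x : ℝ → ℝ)
    (hh : ∀ t ∈ Set.Icc (0:ℝ) T, HasDerivAt h (a * x t) t)
    (hx : ∀ t ∈ Set.Icc (0:ℝ) T, HasDerivAt x ((r - h t) * x t) t)
    (hinit : h 0 = 0) (hxinit : x 0 = x0) :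
    ∀ t ∈ Set.Icc (0:ℝ) T, a * x t - r * h t + (h t)^2 / 2 = a * x0 := by
  set E : ℝ → ℝ := fun s => a * x s - r * h s + (h s) ^ 2 / 2 with hE
  have key : ∀ s ∈ Set.Icc (0:ℝ) T, HasDerivAt E 0 s := by
    intro s hs
    have hd := (((hx s hs).const_mul a).sub ((hh s hs).const_mul r)).add
      (((hh s hs).pow 2).div_const 2)
    refine HasDerivAt.congr_deriv hd ?_
    push_cast
    ring
  intro t ht
  have hsub : Set.Icc (0:ℝ) t ⊆ Set.Icc (0:ℝ) T :=
    Set.Icc_subset_Icc le_rfl ht.2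
  have := constant_of_has_deriv_right_zero
    (f := E) (a := 0) (b := t)
    (fun s hs => ((key s (hsub hs)).continuousAt).continuousWithinAt)
    (fun s hs => (key s (hsub (Set.Ico_subset_Icc_self hs))).hasDerivWithinAt)
    t (Set.mem_Icc.mpr ⟨ht.1, le_rfl⟩)
  simpa [hE, hinit, hxinit] using this
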